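/- Fix an integer k ≥ 2. The function λ ↦ e^{−λ} λ^{k−1} / (f_{k−1}(λ)·(k−1)!) is strictly decreasing on (0, ∞); that is, for all 0 < λ₁ < λ₂ one has e^{−λ₂} λ₂^{k−1} / (f_{k−1}(λ₂)·(k−1)!) < e^{−λ₁} λ₁^{k−1} / (f_{k−1}(λ₁)·(k−1)!). -/
import Mathlib

/-- `fPo k μ = e^{-μ} ∑_{i ≥ k} μ^i / i!`, the probability that a Poisson random
variable with mean `μ` is at least `k`. -/
noncomputable def fPo (k : ℕ) (μ : ℝ) : ℝ :=
  Real.exp (-μ) * ∑' i : ℕ, μ ^ (k + i) / (Nat.factorial (k + i) : ℝ)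

/-- `htil k λ = e^{-λ} λ^{k-1} / (f_{k-1}(λ) (k-1)!)`. -/
noncomputable def htil (k : ℕ) (l : ℝ) : ℝ :=
  Real.exp (-l) * l ^ (k - 1) / (fPo (k - 1) l * (Nat.factorial (k - 1) : ℝ))

lemma gsummable (m : ℕ) (l : ℝ) (hl : 0 ≤ l) :
    Summable (fun i : ℕ => l ^ i / (Nat.factorial (m + i) : ℝ)) := by
  apply Summable.of_nonneg_of_le (fun i => by positivity) (fun i => ?_)
    (Real.summable_pow_div_factorial l)
  apply div_le_div_of_nonneg_left (by positivity) (by positivity)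
  exact_mod_cast Nat.factorial_le (Nat.le_add_left i m)

lemma gpos (m : ℕ) (l : ℝ) (hl : 0 ≤ l) :
    0 < ∑' i : ℕ, l ^ i / (Nat.factorial (m + i) : ℝ) := by
  have h0 : (0:ℝ) < l ^ 0 / (Nat.factorial (m + 0) : ℝ) := by positivity
  calc (0:ℝ) < l ^ 0 / (Nat.factorial (m + 0) : ℝ) := h0
    _ ≤ _ := Summable.le_tsum (gsummable m l hl) 0 (fun i _ => by positivity)

lemma htil_eq (k : ℕ) (l : ℝ) (hl : 0 < l) :
    htil k l = 1 / ((Nat.factorial (k - 1) : ℝ) * ∑' i : ℕ, l ^ i / (Nat.factorial (k - 1 + i) : ℝ)) := by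
  set m := k - 1
  have hsum : (∑' i : ℕ, l ^ (m + i) / (Nat.factorial (m + i) : ℝ))
      = l ^ m * ∑' i : ℕ, l ^ i / (Nat.factorial (m + i) : ℝ) := by
    rw [← tsum_mul_left]
    congr 1; ext i; rw [pow_add]; ring
  have hg := gpos m l hl.le
  rw [htil, fPo, hsum]
  have he : Real.exp (-l) ≠ 0 := (Real.exp_pos _).ne'
  have hlm : l ^ m ≠ 0 := by positivity
  field_simp
  ring

theorem stmt3 (k : ℕ) (hk : 2 ≤ k) :
    ∀ l₁ l₂ : ℝ, 0 < l₁ → l₁ < l₂ → htil k l₂ < htil k l₁ := by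
  intro l₁ l₂ h1 h12
  have h2 : 0 < l₂ := h1.trans h12
  rw [htil_eq k l₁ h1, htil_eq k l₂ h2]
  set m := k - 1
  have hg1 := gpos m l₁ h1.le
  have hg2 := gpos m l₂ h2.le
  have hfac : (0:ℝ) < (Nat.factorial m : ℝ) := by positivity
  have hlt : (∑' i : ℕ, l₁ ^ i / (Nat.factorial (m + i) : ℝ))
      < ∑' i : ℕ, l₂ ^ i / (Nat.factorial (m + i) : ℝ) := by
    apply Summable.tsum_lt_tsum (i := 1) (fun i => ?_) ?_ (gsummable m l₁ h1.le) (gsummable m l₂ h2.le)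
    · gcongr
    · gcongr
  apply one_div_lt_one_div_of_lt
  · exact mul_pos hfac hg1
  · exact mul_lt_mul_of_pos_left hlt hfac
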